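/- Let f : ℝ^n → ℝ^n be convex, monotone, and additively homogeneous, with an eigenvector, and suppose f has exactly one critical class. Then the eigenvector of f is unique up to an additive constant: for any two eigenvectors v and v' of f there exists μ ∈ ℝ with v' = μ·1 + v. -/

import Mathlib

open Matrix Filter

/-- `f` is additively homogeneous: `f (c·1 + x) = c·1 + f x`. -/
def AddHomog {n : ℕ} (f : (Fin n → ℝ) → (Fin n → ℝ)) : Prop :=
  ∀ (c : ℝ) (x : Fin n → ℝ), f (fun i => c + x i) = fun i => c + f x i

/-- A map between coordinate spaces is convex if each coordinate function is convex. -/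
def IsConvexMap {n m : ℕ} (f : (Fin n → ℝ) → (Fin m → ℝ)) : Prop :=
  ∀ i, ConvexOn ℝ Set.univ (fun x => f x i)

/-- Subdifferential of a convex map `f : ℝ^n → ℝ^m` at `v`: matrices `P` with
`f x - f v ≥ P (x - v)` componentwise. -/
def Subdiff {n m : ℕ} (f : (Fin n → ℝ) → (Fin m → ℝ)) (v : Fin n → ℝ) :
    Set (Matrix (Fin m) (Fin n) ℝ) :=
  {P | ∀ x i, P.mulVec (x - v) i ≤ f x i - f v i}

/-- `p` is a stochastic vector. -/
def IsStochVec {n : ℕ} (p : Fin n → ℝ) : Prop := (∀ i, 0 ≤ p i) ∧ ∑ i, p i = 1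

/-- `P` is a row-stochastic matrix. -/
def IsStochMat {n : ℕ} (P : Matrix (Fin n) (Fin n) ℝ) : Prop := ∀ i, IsStochVec (P i)

/-- `i` has access to `j` in the graph of the nonnegative matrix `P`
(arcs `i → j` when `P i j ≠ 0`). -/
def MatAccess {n : ℕ} (P : Matrix (Fin n) (Fin n) ℝ) : Fin n → Fin n → Prop :=
  Relation.ReflTransGen (fun i j => P i j ≠ 0)

/-- `C` is a class of `P`: an equivalence class of mutual access. -/
def IsClass {n : ℕ} (P : Matrix (Fin n) (Fin n) ℝ) (C : Set (Fin n)) : Prop :=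
  ∃ i, C = {j | MatAccess P i j ∧ MatAccess P j i}

/-- `C` is a final class of `P`: a class with no access out of itself. -/
def IsFinalClass {n : ℕ} (P : Matrix (Fin n) (Fin n) ℝ) (C : Set (Fin n)) : Prop :=
  IsClass P C ∧ ∀ i ∈ C, ∀ j, MatAccess P i j → j ∈ C

/-- `N^f(P)`: the union of the final classes of `P`. -/
def finalNodes {n : ℕ} (P : Matrix (Fin n) (Fin n) ℝ) : Set (Fin n) :=
  {i | ∃ C, IsFinalClass P C ∧ i ∈ C}

/-- Final graph `G^f(P)`: union of graphs of `P_{FF}` over final classes `F`. -/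
def finalGraph {n : ℕ} (P : Matrix (Fin n) (Fin n) ℝ) : Fin n → Fin n → Prop :=
  fun i j => ∃ C, IsFinalClass P C ∧ i ∈ C ∧ j ∈ C ∧ P i j ≠ 0

/-- `N^f(PP)` for a set of matrices. -/
def finalNodesSet {n : ℕ} (PP : Set (Matrix (Fin n) (Fin n) ℝ)) : Set (Fin n) :=
  {i | ∃ P ∈ PP, i ∈ finalNodes P}

/-- `𝒞^f(PP)`: final classes of matrices in `PP`. -/
def finalClassesSet {n : ℕ} (PP : Set (Matrix (Fin n) (Fin n) ℝ)) : Set (Set (Fin n)) :=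
  {C | ∃ P ∈ PP, IsFinalClass P C}

/-- `𝒢^f(PP)`: union of final graphs of matrices in `PP`. -/
def finalGraphSet {n : ℕ} (PP : Set (Matrix (Fin n) (Fin n) ℝ)) : Fin n → Fin n → Prop :=
  fun i j => ∃ P ∈ PP, finalGraph P i j

/-- Access in a directed graph given as a relation. -/
def GAccess {n : ℕ} (G : Fin n → Fin n → Prop) : Fin n → Fin n → Prop :=
  Relation.ReflTransGen G

/-- `C` is a (nontrivial) class of the graph `G`: an equivalence class of mutual
access containing at least one arc (i.e. the node set of a strongly connected component
of the graph `G`). -/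
def IsGraphClass {n : ℕ} (G : Fin n → Fin n → Prop) (C : Set (Fin n)) : Prop :=
  (∃ i, C = {j | GAccess G i j ∧ GAccess G j i}) ∧ ∃ i ∈ C, ∃ j ∈ C, G i j

/-- `G^k`: arcs are directed paths of length `k` in `G`. -/
def GraphPow {n : ℕ} (G : Fin n → Fin n → Prop) (k : ℕ) : Fin n → Fin n → Prop :=
  fun i j => ∃ c : ℕ → Fin n, c 0 = i ∧ c k = j ∧ ∀ t < k, G (c t) (c (t + 1))

/-- There is a circuit of length `ℓ ≥ 1` of `G` with all nodes in `C`. -/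
def HasCircuitIn {n : ℕ} (G : Fin n → Fin n → Prop) (C : Set (Fin n)) (ℓ : ℕ) : Prop :=
  0 < ℓ ∧ ∃ c : ℕ → Fin n, c 0 = c ℓ ∧ (∀ t ≤ ℓ, c t ∈ C) ∧ ∀ t < ℓ, G (c t) (c (t + 1))

/-- gcd of a set of natural numbers. -/
noncomputable def SetGcd (S : Set ℕ) : ℕ :=
  sInf {d | (∀ s ∈ S, d ∣ s) ∧ ∀ e, (∀ s ∈ S, e ∣ s) → e ∣ d}

/-- lcm of a set of natural numbers. -/
noncomputable def SetLcm (S : Set ℕ) : ℕ :=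
  sInf {m | (∀ s ∈ S, s ∣ m) ∧ ∀ e, (∀ s ∈ S, s ∣ e) → m ∣ e}

/-- Cyclicity of a graph: lcm over the strongly connected components of the
gcd of the lengths of their circuits. -/
noncomputable def GraphCyclicity {n : ℕ} (G : Fin n → Fin n → Prop) : ℕ :=
  SetLcm {d | ∃ C, IsGraphClass G C ∧ d = SetGcd {ℓ | HasCircuitIn G C ℓ}}

/-- The (additive) eigenspace of `f` for eigenvalue `lam`. -/
def Eigenspace {n : ℕ} (f : (Fin n → ℝ) → (Fin n → ℝ)) (lam : ℝ) : Set (Fin n → ℝ) :=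
  {x | f x = fun i => lam + x i}

/-- Restriction of a vector to the coordinates in `C`. -/
def restrictTo {n : ℕ} (C : Set (Fin n)) (x : Fin n → ℝ) : C → ℝ := fun i => x i

namespace Stmt5Aux
variable {n : ℕ}

lemma mulVec_apply (P : Matrix (Fin n) (Fin n) ℝ) (z : Fin n → ℝ) (i : Fin n) :
    P.mulVec z i = ∑ j, P i j * z j := rfl

lemma access_closed {R : Fin n → Fin n → Prop} {T : Set (Fin n)}
    (hT : ∀ i ∈ T, ∀ j, R i j → j ∈ T) {i j : Fin n}
    (h : Relation.ReflTransGen R i j) (hi : i ∈ T) : j ∈ T := by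
  induction h with
  | refl => exact hi
  | tail _ hbc ih => exact hT _ ih _ hbc

lemma lower_lip {f : (Fin n → ℝ) → (Fin n → ℝ)} (hmon : Monotone f) (hhom : AddHomog f)
    (x y : Fin n → ℝ) (M : ℝ) (hM : ∀ k, y k - M ≤ x k) (i : Fin n) :
    f y i - M ≤ f x i := by
  have h1 : f (fun k => -M + y k) ≤ f x := hmon (fun k => by
    have := hM k; simpa [neg_add_eq_sub] using this)
  have h2 := hhom (-M) y
  have h3 := h1 i
  rw [h2] at h3
  simp only [] at h3
  linarith [h3]

lemma subdiff_nonneg {f : (Fin n → ℝ) → (Fin n → ℝ)} (hmon : Monotone f)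
    {v : Fin n → ℝ} {P : Matrix (Fin n) (Fin n) ℝ} (hP : P ∈ Subdiff f v)
    (i j : Fin n) : 0 ≤ P i j := by
  have h := hP (v - Pi.single j 1) i
  have hsub : (v - Pi.single j 1) - v = -Pi.single j (1:ℝ) := by ring
  rw [hsub] at h
  have hmv : P.mulVec (-Pi.single j (1:ℝ)) i = -(P i j) := by
    have hone : P.mulVec (Pi.single j (1:ℝ)) i = P i j * 1 := by
      rw [Matrix.mulVec_single]; simp
    rw [Matrix.mulVec_neg]
    simp only [Pi.neg_apply, hone]
    ring
  rw [hmv] at h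
  have hle : f (v - Pi.single j 1) i ≤ f v i := by
    have : v - Pi.single j 1 ≤ v := by
      intro k
      simp [Pi.single_apply]
      split <;> norm_num
    exact hmon this i
  linarith

lemma subdiff_rowsum {f : (Fin n → ℝ) → (Fin n → ℝ)} (hhom : AddHomog f)
    {v : Fin n → ℝ} {P : Matrix (Fin n) (Fin n) ℝ} (hP : P ∈ Subdiff f v)
    (i : Fin n) : ∑ j, P i j = 1 := by
  have key : ∀ t : ℝ, t * ∑ j, P i j ≤ t := by
    intro t
    have h := hP (fun k => t + v k) i
    have hsub : (fun k => t + v k) - v = fun _ => t := by funext k; simp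
    rw [hsub] at h
    have hmv : P.mulVec (fun _ => t) i = t * ∑ j, P i j := by
      rw [mulVec_apply, Finset.mul_sum]
      exact Finset.sum_congr rfl (fun j _ => by ring)
    rw [hmv, hhom t v] at h
    simpa using h
  have h1 := key 1
  have h2 := key (-1)
  linarith

lemma exists_subgrad_row {f : (Fin n → ℝ) → (Fin n → ℝ)} (hconv : IsConvexMap f)
    (hmon : Monotone f) (hhom : AddHomog f) (v : Fin n → ℝ) (i : Fin n) :
    ∃ g : (Fin n → ℝ) →ₗ[ℝ] ℝ, ∀ x : Fin n → ℝ, g (x - v) ≤ f x i - f v i := by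
  classical
  set φ : (Fin n → ℝ) → ℝ := fun x => f x i with hφ
  set q : (Fin n → ℝ) → ℝ → ℝ := fun y t => (φ (v + t • y) - φ v) / t with hq
  set Q : (Fin n → ℝ) → Set ℝ := fun y => q y '' Set.Ioi (0:ℝ) with hQ
  have hne : ∀ y, (Q y).Nonempty := fun y => ⟨q y 1, ⟨1, by norm_num, rfl⟩⟩
  have hlb : ∀ y, ∀ t > (0:ℝ), -(∑ k, |y k|) ≤ q y t := by
    intro y t ht
    have hM : ∀ k, v k - t * (∑ k, |y k|) ≤ (v + t • y) k := by
      intro k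
      have h1 : |y k| ≤ ∑ k, |y k| :=
        Finset.single_le_sum (f := fun k => |y k|) (fun _ _ => abs_nonneg _) (Finset.mem_univ k)
      have h2 : -(t * (∑ k, |y k|)) ≤ t * y k := by
        have := neg_abs_le (y k)
        nlinarith [abs_nonneg (y k)]
      simp only [Pi.add_apply, Pi.smul_apply, smul_eq_mul]
      linarith
    have hll := lower_lip hmon hhom (v + t • y) v (t * (∑ k, |y k|)) hM i
    show -(∑ k, |y k|) ≤ (φ (v + t • y) - φ v) / t
    rw [le_div_iff₀ ht]
    simp only [hφ]
    nlinarith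
  have hbdd : ∀ y, BddBelow (Q y) := by
    intro y
    exact ⟨-(∑ k, |y k|), by rintro r ⟨t, ht, rfl⟩; exact hlb y t ht⟩
  have hmono : ∀ y, ∀ s t : ℝ, 0 < s → s ≤ t → q y s ≤ q y t := by
    intro y s t hs hst
    have ht : (0:ℝ) < t := lt_of_lt_of_le hs hst
    have ha : (0:ℝ) ≤ s / t := by positivity
    have hb : (0:ℝ) ≤ 1 - s / t := by
      have : s / t ≤ 1 := by rw [div_le_one ht]; exact hst
      linarith
    have hab : s / t + (1 - s / t) = 1 := by ring
    have hpt : (s/t) • (v + t • y) + (1 - s/t) • v = v + s • y := by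
      funext k
      simp only [Pi.add_apply, Pi.smul_apply, smul_eq_mul]
      field_simp
      ring
    have hc := (hconv i).2 (Set.mem_univ (v + t • y)) (Set.mem_univ v) ha hb hab
    rw [hpt] at hc
    simp only [smul_eq_mul] at hc
    have h2 : φ (v + s • y) - φ v ≤ (s/t) * (φ (v + t • y) - φ v) := by
      simp only [hφ]
      nlinarith [hc]
    show (φ (v + s • y) - φ v) / s ≤ (φ (v + t • y) - φ v) / t
    rw [div_le_div_iff₀ hs ht]
    calc (φ (v + s • y) - φ v) * t ≤ ((s/t) * (φ (v + t • y) - φ v)) * t :=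
          mul_le_mul_of_nonneg_right h2 ht.le
      _ = (φ (v + t • y) - φ v) * s := by field_simp
  set N : (Fin n → ℝ) → ℝ := fun y => sInf (Q y) with hN
  have hNle : ∀ y, ∀ t > (0:ℝ), N y ≤ q y t := fun y t ht =>
    csInf_le (hbdd y) ⟨t, ht, rfl⟩
  have hqscale : ∀ (c : ℝ), 0 < c → ∀ y t, 0 < t → q (c • y) t = c * q y (t * c) := by
    intro c hc y t ht
    rw [hq]; simp only []
    have : v + t • c • y = v + (t * c) • y := by
      funext k; simp [mul_assoc]
    rw [this]
    field_simp
  have hNhom : ∀ (c : ℝ), 0 < c → ∀ y, N (c • y) = c * N y := by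
    intro c hc y
    have hle1 : ∀ (c : ℝ), 0 < c → ∀ y, N (c • y) ≤ c * N y := by
      intro c hc y
      have : N (c • y) / c ≤ N y := by
        apply le_csInf (hne y)
        rintro r ⟨t, ht, rfl⟩
        have ht' : (0:ℝ) < t := ht
        rw [div_le_iff₀ hc]
        have := hNle (c • y) (t / c) (by positivity)
        rw [hqscale c hc y (t/c) (by positivity)] at this
        rw [div_mul_cancel₀] at this
        · linarith [this]
        · exact ne_of_gt hc
      rw [div_le_iff₀ hc] at this
      linarith
    have h1 := hle1 c hc y
    have h2 := hle1 c⁻¹ (by positivity) (c • y)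
    rw [smul_smul, inv_mul_cancel₀ (ne_of_gt hc), one_smul] at h2
    have : c * N y ≤ c * (c⁻¹ * N (c • y)) := by
      exact mul_le_mul_of_nonneg_left h2 hc.le
    rw [← mul_assoc, mul_inv_cancel₀ (ne_of_gt hc), one_mul] at this
    linarith
  have hNadd : ∀ y z, N (y + z) ≤ N y + N z := by
    intro y z
    by_contra hcon
    push_neg at hcon
    set ε := (N (y + z) - (N y + N z)) / 3 with hε
    have hεpos : 0 < ε := by rw [hε]; linarith
    obtain ⟨ry, ⟨ty, hty, rfl⟩, hry⟩ : ∃ r ∈ Q y, r < N y + ε :=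
      exists_lt_of_csInf_lt (hne y) (lt_add_of_pos_right (N y) hεpos)
    obtain ⟨rz, ⟨tz, htz, rfl⟩, hrz⟩ : ∃ r ∈ Q z, r < N z + ε :=
      exists_lt_of_csInf_lt (hne z) (lt_add_of_pos_right (N z) hεpos)
    have hty' : (0:ℝ) < ty := hty
    have htz' : (0:ℝ) < tz := htz
    set t := min ty tz / 2 with hT
    have htpos : 0 < t := by rw [hT]; positivity
    have h2t_y : 2 * t ≤ ty := by
      rw [hT]; have := min_le_left ty tz; linarith
    have h2t_z : 2 * t ≤ tz := by
      rw [hT]; have := min_le_right ty tz; linarith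
    have hmid : q (y + z) t ≤ q y (2*t) + q z (2*t) := by
      have hpt : (1/2 : ℝ) • (v + (2*t) • y) + (1/2 : ℝ) • (v + (2*t) • z)
          = v + t • (y + z) := by
        funext k
        simp only [Pi.add_apply, Pi.smul_apply, smul_eq_mul]
        ring
      have hc := (hconv i).2 (Set.mem_univ (v + (2*t) • y)) (Set.mem_univ (v + (2*t) • z))
        (by norm_num : (0:ℝ) ≤ 1/2) (by norm_num : (0:ℝ) ≤ 1/2) (by norm_num)
      rw [hpt] at hc
      simp only [smul_eq_mul] at hc
      show (φ (v + t • (y+z)) - φ v) / t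
          ≤ (φ (v + (2*t) • y) - φ v) / (2*t) + (φ (v + (2*t) • z) - φ v) / (2*t)
      rw [← add_div, div_le_div_iff₀ htpos (by positivity : (0:ℝ) < 2*t)]
      simp only [hφ]
      nlinarith [hc, htpos]
    have hq_y : q y (2*t) ≤ q y ty := hmono y (2*t) ty (by positivity) h2t_y
    have hq_z : q z (2*t) ≤ q z tz := hmono z (2*t) tz (by positivity) h2t_z
    have hfin : N (y + z) ≤ q (y+z) t := hNle (y+z) t htpos
    have : N (y + z) < N y + N z + 2 * ε := by linarith
    rw [hε] at this
    linarith
  have hHB := exists_extension_of_le_sublinear (⟨⊥, 0⟩ : (Fin n → ℝ) →ₗ.[ℝ] ℝ) N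
    (fun c hc x => hNhom c hc x) hNadd (by
      rintro ⟨x, hx⟩
      rcases (Submodule.mem_bot ℝ).1 hx with rfl
      have : (0:ℝ) ≤ N 0 := by
        apply le_csInf (hne 0)
        rintro r ⟨t, ht, rfl⟩
        rw [hq]
        simp
      simpa using this)
  obtain ⟨g, -, hg⟩ := hHB
  refine ⟨g, fun x => ?_⟩
  have h1 : N (x - v) ≤ φ x - φ v := by
    have := hNle (x - v) 1 one_pos
    rw [hq] at this
    simp only [one_smul, one_div, div_one] at this
    have hxv : v + (x - v) = x := by ring
    rw [hxv] at this
    exact this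
  exact le_trans (hg (x - v)) h1

lemma exists_subdiff {f : (Fin n → ℝ) → (Fin n → ℝ)} (hconv : IsConvexMap f)
    (hmon : Monotone f) (hhom : AddHomog f) (v : Fin n → ℝ) :
    ∃ P, P ∈ Subdiff f v := by
  classical
  choose g hg using exists_subgrad_row hconv hmon hhom v
  refine ⟨(Matrix.of fun i j => g i (fun k => if j = k then (1:ℝ) else 0)), fun x i => ?_⟩
  have hlin : (Matrix.of fun (i : Fin n) (j : Fin n) =>
      g i (fun k => if j = k then (1:ℝ) else 0)).mulVec (x - v) i = g i (x - v) := by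
    rw [mulVec_apply]
    conv_rhs => rw [pi_eq_sum_univ (x - v)]
    rw [map_sum]
    refine Finset.sum_congr rfl (fun j _ => ?_)
    rw [LinearMap.map_smul, smul_eq_mul, Matrix.of_apply]
    ring
  rw [hlin]
  exact hg i x

def Reach (P : Matrix (Fin n) (Fin n) ℝ) (i : Fin n) : Set (Fin n) := {j | MatAccess P i j}

lemma reach_mono {P : Matrix (Fin n) (Fin n) ℝ} {i j : Fin n} (h : MatAccess P i j) :
    Reach P j ⊆ Reach P i := fun _ hk => Relation.ReflTransGen.trans h hk

lemma exists_final_class_in (P : Matrix (Fin n) (Fin n) ℝ) {S : Set (Fin n)} {i0 : Fin n}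
    (hi0 : i0 ∈ S) (hS : ∀ i ∈ S, ∀ j, P i j ≠ 0 → j ∈ S) :
    ∃ C, IsFinalClass P C ∧ C ⊆ S := by
  classical
  have hSacc : ∀ i ∈ S, ∀ j, MatAccess P i j → j ∈ S := fun i hi j h =>
    access_closed hS h hi
  have key : ∀ m (i : Fin n), (Reach P i).ncard ≤ m →
      ∃ j, MatAccess P i j ∧ ∀ k, MatAccess P j k → Reach P k = Reach P j := by
    intro m
    induction m with
    | zero =>
      intro i hcard
      exfalso
      have : i ∈ Reach P i := Relation.ReflTransGen.refl
      have h0 : (Reach P i).ncard = 0 := Nat.le_zero.1 hcard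
      rw [Set.ncard_eq_zero (Set.toFinite _)] at h0
      simp [h0] at this
    | succ m ih =>
      intro i hcard
      by_cases h : ∀ k, MatAccess P i k → Reach P k = Reach P i
      · exact ⟨i, Relation.ReflTransGen.refl, fun k hk => by rw [h k hk]⟩
      · push_neg at h
        obtain ⟨k, hik, hne⟩ := h
        have hsub : Reach P k ⊂ Reach P i := ⟨reach_mono hik, fun hle => hne
          (le_antisymm (reach_mono hik) hle)⟩
        have hlt : (Reach P k).ncard < (Reach P i).ncard :=
          Set.ncard_lt_ncard hsub (Set.toFinite _)
        obtain ⟨j, hkj, hj⟩ := ih k (by omega)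
        exact ⟨j, Relation.ReflTransGen.trans hik hkj, hj⟩
  obtain ⟨i1, hi01, hi1⟩ := key (Reach P i0).ncard i0 le_rfl
  refine ⟨Reach P i1, ⟨⟨i1, ?_⟩, fun a ha j haj => Relation.ReflTransGen.trans ha haj⟩,
    fun j hj => hSacc i0 hi0 j (Relation.ReflTransGen.trans hi01 hj)⟩
  ext j
  constructor
  · intro hj
    refine ⟨hj, ?_⟩
    have h1 : i1 ∈ Reach P j := by
      rw [hi1 j hj]; exact Relation.ReflTransGen.refl
    exact h1
  · rintro ⟨h1, -⟩
    exact h1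

lemma argmin_step {P : Matrix (Fin n) (Fin n) ℝ} (hpos : ∀ i j, 0 ≤ P i j)
    (hrow : ∀ i, ∑ j, P i j = 1) {z : Fin n → ℝ} {m : ℝ} {i : Fin n}
    (hz : P.mulVec z i ≤ z i) (him : z i = m)
    (hge : ∀ j, P i j ≠ 0 → m ≤ z j) :
    ∀ j, P i j ≠ 0 → z j = m := by
  have hterm : ∀ j : Fin n, 0 ≤ P i j * (z j - m) := by
    intro j
    by_cases h : P i j = 0
    · simp [h]
    · have := hge j h
      have := hpos i j
      nlinarith
  have hsum : ∑ j, P i j * (z j - m) = 0 := by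
    have hle : ∑ j, P i j * (z j - m) ≤ 0 := by
      have e1 : ∑ j, P i j * (z j - m) = (∑ j, P i j * z j) - (∑ j, P i j) * m := by
        rw [Finset.sum_mul, ← Finset.sum_sub_distrib]
        exact Finset.sum_congr rfl (fun j _ => by ring)
      have e2 : P.mulVec z i = ∑ j, P i j * z j := rfl
      rw [e1, hrow i]
      rw [e2] at hz
      linarith
    have hge' : 0 ≤ ∑ j, P i j * (z j - m) := Finset.sum_nonneg (fun j _ => hterm j)
    linarith
  intro j hj
  have := (Finset.sum_eq_zero_iff_of_nonneg (fun j _ => hterm j)).1 hsum j (Finset.mem_univ j)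
  rcases mul_eq_zero.1 this with h | h
  · exact absurd h hj
  · linarith

lemma const_on_final_class {P : Matrix (Fin n) (Fin n) ℝ} (hpos : ∀ i j, 0 ≤ P i j)
    (hrow : ∀ i, ∑ j, P i j = 1) {F : Set (Fin n)} (hF : IsFinalClass P F)
    {z : Fin n → ℝ} (hz : ∀ i, P.mulVec z i ≤ z i) :
    ∃ c, ∀ j ∈ F, z j = c := by
  classical
  rcases Set.eq_empty_or_nonempty F with h | ⟨i0, hi0⟩
  · exact ⟨0, fun j hj => by simp [h] at hj⟩
  obtain ⟨i1, hi1F, hmin⟩ := Set.exists_min_image F z (Set.toFinite F) ⟨i0, hi0⟩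
  set m := z i1 with hm
  refine ⟨m, fun j hj => ?_⟩
  obtain ⟨ic, hFeq⟩ := hF.1
  have hacc : MatAccess P i1 j := by
    have h1 : MatAccess P i1 ic := (hFeq ▸ hi1F).2
    have h2 : MatAccess P ic j := (hFeq ▸ hj).1
    exact Relation.ReflTransGen.trans h1 h2
  have hclosed : ∀ a ∈ {i | i ∈ F ∧ z i = m}, ∀ b, (P a b ≠ 0) →
      b ∈ {i | i ∈ F ∧ z i = m} := by
    rintro a ⟨haF, ham⟩ b hab
    have hbF : b ∈ F := hF.2 a haF b (Relation.ReflTransGen.single hab)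
    exact ⟨hbF, argmin_step hpos hrow (hz a) ham (fun k hk =>
      hmin k (hF.2 a haF k (Relation.ReflTransGen.single hk))) b hab⟩
  exact (access_closed hclosed hacc ⟨hi1F, rfl⟩).2

/-- Transplant a final class from a subdifferential at one eigenvector to another. -/
lemma transplant {f : (Fin n → ℝ) → (Fin n → ℝ)} {u y : Fin n → ℝ} {lam : ℝ}
    (hu : f u = fun i => lam + u i) (hy : f y = fun i => lam + y i)
    {P Q0 : Matrix (Fin n) (Fin n) ℝ} (hP : P ∈ Subdiff f y) (hQ0 : Q0 ∈ Subdiff f u)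
    (hpos : ∀ i j, 0 ≤ P i j) (hrow : ∀ i, ∑ j, P i j = 1)
    {F : Set (Fin n)} (hF : IsFinalClass P F) :
    ∃ Q ∈ Subdiff f u, IsFinalClass Q F := by
  classical
  have hz : ∀ i, P.mulVec (u - y) i ≤ (u - y) i := by
    intro i
    have h := hP u i
    rw [hu, hy] at h
    simp only [Pi.sub_apply]
    simpa using h
  obtain ⟨c, hc⟩ := const_on_final_class hpos hrow hF hz
  set Q : Matrix (Fin n) (Fin n) ℝ := fun i j => if i ∈ F then P i j else Q0 i j with hQdef
  have hrowF : ∀ i ∈ F, ∀ j, P i j ≠ 0 → j ∈ F := fun i hi j hij =>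
    hF.2 i hi j (Relation.ReflTransGen.single hij)
  have hQmem : Q ∈ Subdiff f u := by
    intro x i
    by_cases hiF : i ∈ F
    · have hQrow : Q.mulVec (x - u) i = P.mulVec (x - u) i := by
        rw [mulVec_apply, mulVec_apply]
        exact Finset.sum_congr rfl (fun j _ => by rw [hQdef]; simp [hiF])
      have hsplit : P.mulVec (x - u) i = P.mulVec (x - y) i - P.mulVec (u - y) i := by
        simp only [mulVec_apply, ← Finset.sum_sub_distrib]
        refine Finset.sum_congr rfl (fun j _ => ?_)
        simp only [Pi.sub_apply]
        ring
      have hPuy : P.mulVec (u - y) i = c := by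
        rw [mulVec_apply]
        have : ∀ j : Fin n, P i j * (u - y) j = P i j * c := by
          intro j
          by_cases h : P i j = 0
          · simp [h]
          · have hjF := hrowF i hiF j h
            rw [show (u - y) j = c from by simpa [Pi.sub_apply] using hc j hjF]
        rw [Finset.sum_congr rfl (fun j _ => this j), ← Finset.sum_mul, hrow i, one_mul]
      have hci : u i - y i = c := by simpa [Pi.sub_apply] using hc i hiF
      have hPxy := hP x i
      rw [hQrow, hsplit, hPuy]
      have hfu : f u i = lam + u i := by rw [hu]
      have hfy : f y i = lam + y i := by rw [hy]
      rw [hfu]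
      rw [hfy] at hPxy
      linarith
    · have hQrow : Q.mulVec (x - u) i = Q0.mulVec (x - u) i := by
        rw [mulVec_apply, mulVec_apply]
        exact Finset.sum_congr rfl (fun j _ => by rw [hQdef]; simp [hiF])
      rw [hQrow]
      exact hQ0 x i
  have harcQ : ∀ a ∈ F, ∀ b, (Q a b ≠ 0 ↔ P a b ≠ 0) := by
    intro a ha b
    rw [hQdef]
    simp [ha]
  have claimA : ∀ a ∈ F, ∀ b, MatAccess P a b → b ∈ F ∧ MatAccess Q a b := by
    intro a ha b hab
    refine access_closed (T := {b | b ∈ F ∧ MatAccess Q a b}) ?_ hab ⟨ha, .refl⟩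
    rintro x ⟨hxF, hQax⟩ b hxb
    exact ⟨hrowF x hxF b hxb, hQax.tail ((harcQ x hxF b).2 hxb)⟩
  have claimB : ∀ a ∈ F, ∀ b, MatAccess Q a b → b ∈ F ∧ MatAccess P a b := by
    intro a ha b hab
    refine access_closed (T := {b | b ∈ F ∧ MatAccess P a b}) ?_ hab ⟨ha, .refl⟩
    rintro x ⟨hxF, hPax⟩ b hxb
    have hPxb : P x b ≠ 0 := (harcQ x hxF b).1 hxb
    exact ⟨hrowF x hxF b hPxb, hPax.tail hPxb⟩
  obtain ⟨ic, hFeq⟩ := hF.1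
  have hicF : ic ∈ F := by rw [hFeq]; exact ⟨.refl, .refl⟩
  refine ⟨Q, hQmem, ⟨ic, ?_⟩, fun a ha b hab => (claimB a ha b hab).1⟩
  ext j
  constructor
  · intro hj
    have h1 : MatAccess P ic j := (hFeq ▸ hj).1
    have h2 : MatAccess P j ic := (hFeq ▸ hj).2
    exact ⟨(claimA ic hicF j h1).2, (claimA j hj ic h2).2⟩
  · rintro ⟨h1, h2⟩
    exact (claimB ic hicF j h1).1

/-- A final class of a matrix in `PP` is contained in a graph class of `𝒢^f(PP)`. -/
lemma finalclass_graphclass {PP : Set (Matrix (Fin n) (Fin n) ℝ)}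
    {Q : Matrix (Fin n) (Fin n) ℝ} (hQ : Q ∈ PP) (hrow : ∀ i, ∑ j, Q i j = 1)
    {F : Set (Fin n)} (hF : IsFinalClass Q F) :
    ∃ C, IsGraphClass (finalGraphSet PP) C ∧ F ⊆ C := by
  classical
  set G := finalGraphSet PP with hG
  have harc : ∀ a ∈ F, ∀ b ∈ F, Q a b ≠ 0 → G a b := by
    intro a ha b hb hab
    exact ⟨Q, hQ, F, hF, ha, hb, hab⟩
  have hGacc : ∀ a ∈ F, ∀ b, MatAccess Q a b → b ∈ F ∧ GAccess G a b := by
    intro a ha b hab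
    refine access_closed (T := {b | b ∈ F ∧ GAccess G a b}) ?_ hab ⟨ha, .refl⟩
    rintro x ⟨hxF, hGax⟩ b hxb
    have hbF : b ∈ F := hF.2 x hxF b (Relation.ReflTransGen.single hxb)
    exact ⟨hbF, hGax.tail (harc x hxF b hbF hxb)⟩
  obtain ⟨ic, hFeq⟩ := hF.1
  have hicF : ic ∈ F := by rw [hFeq]; exact ⟨.refl, .refl⟩
  have hFsub : F ⊆ {j | GAccess G ic j ∧ GAccess G j ic} := by
    intro a ha
    have h1 : MatAccess Q ic a := (hFeq ▸ ha).1
    have h2 : MatAccess Q a ic := (hFeq ▸ ha).2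
    exact ⟨(hGacc ic hicF a h1).2, (hGacc a ha ic h2).2⟩
  obtain ⟨j0, -, hj0⟩ := Finset.exists_ne_zero_of_sum_ne_zero
    (by rw [hrow ic]; norm_num : ∑ j, Q ic j ≠ 0)
  have hj0F : j0 ∈ F := hF.2 ic hicF j0 (Relation.ReflTransGen.single hj0)
  refine ⟨{j | GAccess G ic j ∧ GAccess G j ic}, ⟨⟨ic, rfl⟩, ic, ⟨.refl, .refl⟩,
    j0, hFsub hj0F, harc ic hicF j0 hj0F hj0⟩, hFsub⟩

end Stmt5Aux

section MainProof
open Stmt5Aux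

/-- Step A: an eigenvector differs from `u` by a constant on the unique critical class. -/
lemma stepA {n : ℕ} (hn : 1 ≤ n) {f : (Fin n → ℝ) → (Fin n → ℝ)}
    (hconv : IsConvexMap f) (hmon : Monotone f) (hhom : AddHomog f)
    {u : Fin n → ℝ} {lam : ℝ} (hu : f u = fun i => lam + u i)
    {C : Set (Fin n)}
    (huniq : ∀ C', IsGraphClass (finalGraphSet (Subdiff f u)) C' → C' = C)
    {x : Fin n → ℝ} (hx : f x = fun i => lam + x i) :
    ∃ c, ∀ i ∈ C, x i - u i = c := by
  classical
  haveI : Nonempty (Fin n) := ⟨⟨0, hn⟩⟩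
  set G := finalGraphSet (Subdiff f u) with hG
  have hsuper : ∀ Q ∈ Subdiff f u, ∀ i, Q.mulVec (x - u) i ≤ (x - u) i := by
    intro Q hQ i
    have h := hQ x i
    rw [hx, hu] at h
    simp only [Pi.sub_apply]
    simpa using h
  obtain ⟨i1, -, hmin⟩ := Finset.exists_min_image Finset.univ (x - u) Finset.univ_nonempty
  set m := (x - u) i1 with hm
  set T : Set (Fin n) := {i | (x - u) i = m} with hT
  have hTQ : ∀ Q ∈ Subdiff f u, ∀ a ∈ T, ∀ b, Q a b ≠ 0 → b ∈ T := by
    intro Q hQ a ha b hab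
    exact argmin_step (subdiff_nonneg hmon hQ) (subdiff_rowsum hhom hQ)
      (hsuper Q hQ a) ha (fun k _ => hmin k (Finset.mem_univ k)) b hab
  have hTG : ∀ a ∈ T, ∀ b, G a b → b ∈ T := by
    rintro a ha b ⟨Q, hQ, C', hC', haC', hbC', hab⟩
    exact hTQ Q hQ a ha b hab
  obtain ⟨Q0, hQ0⟩ := exists_subdiff hconv hmon hhom u
  obtain ⟨F, hFfin, hFT⟩ := exists_final_class_in Q0 (show i1 ∈ T from rfl) (hTQ Q0 hQ0)
  obtain ⟨C0, hC0, hFC0⟩ := finalclass_graphclass hQ0 (subdiff_rowsum hhom hQ0) hFfin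
  have hC0C : C0 = C := huniq C0 hC0
  obtain ⟨ic, hFeq⟩ := hFfin.1
  have hicF : ic ∈ F := by rw [hFeq]; exact ⟨.refl, .refl⟩
  have hicC : ic ∈ C := hC0C ▸ hFC0 hicF
  have hicT : ic ∈ T := hFT hicF
  obtain ⟨iC, hCeq⟩ := (huniq C0 hC0 ▸ hC0.1 : ∃ i, C = {j | GAccess G i j ∧ GAccess G j i})
  have hCT : C ⊆ T := by
    intro j hj
    have h1 : GAccess G ic iC := (hCeq ▸ hicC).2
    have h2 : GAccess G iC j := (hCeq ▸ hj).1
    exact access_closed hTG (Relation.ReflTransGen.trans h1 h2) hicT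
  exact ⟨m, fun i hi => by simpa [Pi.sub_apply, hT] using hCT hi⟩

/-- Step B: eigenvectors agreeing on the unique critical class are comparable. -/
lemma stepB {n : ℕ} (hn : 1 ≤ n) {f : (Fin n → ℝ) → (Fin n → ℝ)}
    (hconv : IsConvexMap f) (hmon : Monotone f) (hhom : AddHomog f)
    {u : Fin n → ℝ} {lam : ℝ} (hu : f u = fun i => lam + u i)
    {C : Set (Fin n)}
    (huniq : ∀ C', IsGraphClass (finalGraphSet (Subdiff f u)) C' → C' = C)
    {x y : Fin n → ℝ} (hx : f x = fun i => lam + x i) (hy : f y = fun i => lam + y i)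
    (hagree : ∀ i ∈ C, x i = y i) : ∀ i, y i ≤ x i := by
  classical
  haveI : Nonempty (Fin n) := ⟨⟨0, hn⟩⟩
  obtain ⟨P', hP'⟩ := exists_subdiff hconv hmon hhom y
  obtain ⟨Q0, hQ0⟩ := exists_subdiff hconv hmon hhom u
  have hsuper : ∀ i, P'.mulVec (x - y) i ≤ (x - y) i := by
    intro i
    have h := hP' x i
    rw [hx, hy] at h
    simp only [Pi.sub_apply]
    simpa using h
  obtain ⟨i1, -, hmin⟩ := Finset.exists_min_image Finset.univ (x - y) Finset.univ_nonempty
  set m := (x - y) i1 with hm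
  set T : Set (Fin n) := {i | (x - y) i = m} with hT
  have hTP : ∀ a ∈ T, ∀ b, P' a b ≠ 0 → b ∈ T := by
    intro a ha b hab
    exact argmin_step (subdiff_nonneg hmon hP') (subdiff_rowsum hhom hP')
      (hsuper a) ha (fun k _ => hmin k (Finset.mem_univ k)) b hab
  obtain ⟨F, hFfin, hFT⟩ := exists_final_class_in P' (show i1 ∈ T from rfl) hTP
  obtain ⟨Q, hQmem, hQF⟩ := transplant hu hy hP' hQ0
    (subdiff_nonneg hmon hP') (subdiff_rowsum hhom hP') hFfin
  obtain ⟨C0, hC0, hFC0⟩ := finalclass_graphclass hQmem (subdiff_rowsum hhom hQmem) hQF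
  have hC0C : C0 = C := huniq C0 hC0
  obtain ⟨ic, hFeq⟩ := hFfin.1
  have hicF : ic ∈ F := by rw [hFeq]; exact ⟨.refl, .refl⟩
  have hicC : ic ∈ C := hC0C ▸ hFC0 hicF
  have hm0 : m = 0 := by
    have h1 : (x - y) ic = m := hFT hicF
    have h2 : x ic = y ic := hagree ic hicC
    simp only [Pi.sub_apply] at h1
    linarith
  intro i
  have := hmin i (Finset.mem_univ i)
  rw [hm0] at this
  simp only [Pi.sub_apply] at this
  linarith

end MainProof
/-- a convex monotone additively homogeneous map with a unique critical
class has a unique eigenvector up to an additive constant. -/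
theorem stmt5 (n : ℕ) (hn : 1 ≤ n) (f : (Fin n → ℝ) → (Fin n → ℝ))
    (hconv : IsConvexMap f) (hmon : Monotone f) (hhom : AddHomog f)
    (u : Fin n → ℝ) (lam : ℝ) (hu : f u = fun i => lam + u i)
    (huniq : ∃! C, IsGraphClass (finalGraphSet (Subdiff f u)) C)
    (v v' : Fin n → ℝ)
    (hv : f v = fun i => lam + v i) (hv' : f v' = fun i => lam + v' i) :
    ∃ μ : ℝ, v' = fun i => μ + v i := by
  obtain ⟨C, hC, huniq'⟩ := huniq
  have huC : ∀ C', IsGraphClass (finalGraphSet (Subdiff f u)) C' → C' = C := fun C' h =>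
    huniq' C' h
  obtain ⟨c, hc⟩ := stepA hn hconv hmon hhom hu huC hv
  obtain ⟨c', hc'⟩ := stepA hn hconv hmon hhom hu huC hv'
  set v'' : Fin n → ℝ := fun i => (c' - c) + v i with hv''def
  have hv'' : f v'' = fun i => lam + v'' i := by
    rw [hv''def, hhom (c' - c) v, hv]
    funext i
    ring
  have hagree : ∀ i ∈ C, v' i = v'' i := by
    intro i hi
    have h1 := hc i hi
    have h2 := hc' i hi
    rw [hv''def]
    simp only []
    linarith
  have hle1 := stepB hn hconv hmon hhom hu huC hv' hv'' hagree
  have hle2 := stepB hn hconv hmon hhom hu huC hv'' hv' (fun i hi => (hagree i hi).symm)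
  refine ⟨c' - c, funext fun i => ?_⟩
  have := le_antisymm (hle2 i) (hle1 i)
  rw [hv''def] at this
  simpa using this
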